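/- Let γ : S¹ → ℝᵈ be a simple closed curve, and suppose for i = 1, 2, 3 the shadow πᵢ(γ) is a simple path and the restriction of πᵢ to the image of γ is exactly 2-to-1 over the interior of the path (with exactly two points of γ mapping to the two endpoints). Then there is a continuous map fᵢ : γ → γ of topological degree −1 such that πᵢ(x) = πᵢ(fᵢ(x)) for all x ∈ γ, whose only fixed points are the two points mapping to the endpoints. -/

import Mathlib

open Real unitInterval

/-- Orthogonal projection of `ℝᵈ` onto the coordinate hyperplane `{x : xᵢ = 0}`. -/
noncomputable def coordProj {d : ℕ} (i : Fin d) (x : EuclideanSpace ℝ (Fin d)) :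
    EuclideanSpace ℝ (Fin d) :=
  WithLp.toLp 2 (Function.update x i 0)

/-- `CircleDeg f n` : the continuous map `f : S¹ → S¹` has topological degree `n`,
expressed via a continuous lift `F : ℝ → ℝ` along the exponential covering map. -/
def CircleDeg (f : Circle → Circle) (n : ℤ) : Prop :=
  ∃ F : ℝ → ℝ, Continuous F ∧ (∀ t : ℝ, f (Circle.exp t) = Circle.exp (F t)) ∧
    ∀ t : ℝ, F (t + 2 * π) = F t + n * (2 * π)

lemma coordProj_continuous {d : ℕ} (i : Fin d) : Continuous (coordProj i) := by
  have : Continuous (fun x : EuclideanSpace ℝ (Fin d) => (fun j => Function.update x i 0 j : Fin d → ℝ)) := by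
    refine continuous_pi fun j => ?_
    simp only [Function.update_apply]
    by_cases h : j = i
    · simpa [h] using (continuous_const : Continuous fun _ : EuclideanSpace ℝ (Fin d) => (0:ℝ))
    · simpa [h] using (EuclideanSpace.proj (𝕜 := ℝ) j).continuous
  exact (PiLp.continuous_toLp 2 (fun _ : Fin d => ℝ)).comp this

lemma continuous_circle_of_comp_exp (g : Circle → Circle) (h : Continuous (g ∘ Circle.exp)) :
    Continuous g := by
  have hq := QuotientAddGroup.isQuotientMap_mk (AddSubgroup.zmultiples (2*π))
  have h1 : Continuous ((g ∘ (AddCircle.homeomorphCircle' : AddCircle (2*π) ≃ₜ Circle)) ∘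
      (QuotientAddGroup.mk : ℝ → AddCircle (2*π))) := h
  exact AddCircle.homeomorphCircle'.comp_continuous_iff'.mp (hq.continuous_iff.mpr h1)

lemma exp_inj_Ico {t0 : ℝ} {s t : ℝ} (hs : s ∈ Set.Ico t0 (t0 + 2*π))
    (ht : t ∈ Set.Ico t0 (t0 + 2*π)) (h : Circle.exp s = Circle.exp t) : s = t := by
  obtain ⟨m, hm⟩ := Circle.exp_eq_exp.mp h
  have hst : |s - t| < 2 * π := by
    rw [abs_sub_lt_iff]
    exact ⟨by linarith [hs.2, ht.1], by linarith [ht.2, hs.1]⟩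
  have h3 : |(m:ℝ)| * (2*π) < 1 * (2*π) := by
    rw [← abs_of_pos Real.two_pi_pos, ← abs_mul, abs_of_pos Real.two_pi_pos]
    calc |(m:ℝ) * (2*π)| = |s - t| := by rw [hm]; ring_nf
      _ < 2*π := hst
      _ = 1 * (2*π) := by ring
  have h4 : |(m:ℝ)| < 1 := lt_of_mul_lt_mul_right h3 Real.two_pi_pos.le
  have h5 : |m| < 1 := by
    have : ((|m| : ℤ) : ℝ) < 1 := by rw [Int.cast_abs]; exact h4
    exact_mod_cast this
  have h6 : m = 0 := by
    rcases abs_lt.mp h5 with ⟨h7, h8⟩; omega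
  rw [hm, h6]; push_cast; ring

lemma exp_sub_int_mul (t : ℝ) (m : ℤ) : Circle.exp (t - m * (2*π)) = Circle.exp t :=
  Circle.exp_eq_exp.mpr ⟨-m, by push_cast; ring⟩

set_option maxHeartbeats 1000000 in
/-- If the `i`-th shadow of a simple closed curve `γ` is a simple path `lam` and the
projection restricted to the curve is exactly 2-to-1 over the interior of the path, with
exactly one point of the curve over each endpoint, then there is a "flipping" map of the
curve (expressed via the parameterization as `g : S¹ → S¹`) of topological degree `-1`
that preserves the projection, whose only fixed points are the two points over the
endpoints. -/
theorem flipping_map_exists (d : ℕ) (i : Fin d)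
    (γ : Circle → EuclideanSpace ℝ (Fin d)) (hγ : Topology.IsEmbedding γ)
    (lam : I → EuclideanSpace ℝ (Fin d)) (hlam : Topology.IsEmbedding lam)
    (hrange : Set.range lam = coordProj i '' Set.range γ)
    (h2to1 : ∀ t : I, (t : ℝ) ∈ Set.Ioo (0 : ℝ) 1 →
      ∃ x y : Circle, x ≠ y ∧ {z : Circle | coordProj i (γ z) = lam t} = {x, y})
    (hend0 : ∃! z : Circle, coordProj i (γ z) = lam 0)
    (hend1 : ∃! z : Circle, coordProj i (γ z) = lam 1) :
    ∃ g : Circle → Circle, Continuous g ∧ CircleDeg g (-1) ∧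
      (∀ z : Circle, coordProj i (γ (g z)) = coordProj i (γ z)) ∧
      (∀ z : Circle, g z = z ↔
        (coordProj i (γ z) = lam 0 ∨ coordProj i (γ z) = lam 1)) := by
  obtain ⟨a, ha, ha'⟩ := hend0
  obtain ⟨b, hb, hb'⟩ := hend1
  have hab : a ≠ b := by
    intro h
    have : lam 0 = lam 1 := by rw [← ha, h, hb]
    have h01 : (0 : I) = 1 := hlam.injective this
    have := congrArg (Subtype.val) h01
    norm_num at this
  -- the height function
  have hmem : ∀ z : Circle, coordProj i (γ z) ∈ Set.range lam := by
    intro z; rw [hrange]; exact Set.mem_image_of_mem _ (Set.mem_range_self z)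
  set e : I ≃ₜ Set.range lam := hlam.toHomeomorph with he
  set h : Circle → I := fun z => e.symm ⟨coordProj i (γ z), hmem z⟩ with hh
  have hlamh : ∀ z, lam (h z) = coordProj i (γ z) := by
    intro z
    have := e.apply_symm_apply ⟨coordProj i (γ z), hmem z⟩
    exact congrArg Subtype.val this
  have hcont : Continuous h := by
    apply e.symm.continuous.comp
    exact Continuous.subtype_mk ((coordProj_continuous i).comp hγ.continuous) _
  have hchar : ∀ (z : Circle) (t : I), h z = t ↔ coordProj i (γ z) = lam t := by
    intro z t
    constructor
    · intro hz; rw [← hlamh z, hz]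
    · intro hz; exact hlam.injective (by rw [hlamh z, hz])
  have hz0 : ∀ z, h z = 0 ↔ z = a := by
    intro z
    rw [hchar]
    exact ⟨fun hz => ha' z hz, fun hz => hz ▸ ha⟩
  have hz1 : ∀ z, h z = 1 ↔ z = b := by
    intro z
    rw [hchar]
    exact ⟨fun hz => hb' z hz, fun hz => hz ▸ hb⟩
  have two_pi := Real.two_pi_pos
  -- parameters on the circle
  set t0 : ℝ := Complex.arg (a : ℂ) with ht0def
  have hexpt0 : Circle.exp t0 = a := Circle.exp_arg a
  set s1 : ℝ := Complex.arg (b : ℂ) with hs1def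
  have hexps1 : Circle.exp s1 = b := Circle.exp_arg b
  set δ : ℝ := (s1 - t0) - ⌊(s1 - t0) / (2*π)⌋ * (2*π) with hδ
  have hδ0 : 0 ≤ δ := Int.sub_floor_div_mul_nonneg _ Real.two_pi_pos
  have hδ2 : δ < 2*π := Int.sub_floor_div_mul_lt _ Real.two_pi_pos
  set t1 : ℝ := t0 + δ with ht1def
  have hexpt1 : Circle.exp t1 = b := by
    rw [← hexps1]
    have h9 : t1 = s1 - (⌊(s1 - t0)/(2*π)⌋ : ℤ) * (2*π) := by rw [ht1def, hδ]; push_cast; ring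
    rw [h9]; exact exp_sub_int_mul _ _
  have hδne : δ ≠ 0 := by
    intro h0
    exact hab (by rw [← hexpt0, ← hexpt1, ht1def, h0, add_zero])
  have ht01 : t0 < t1 := by
    have := lt_of_le_of_ne hδ0 (Ne.symm hδne); rw [ht1def]; linarith
  have ht12 : t1 < t0 + 2*π := by rw [ht1def]; linarith
  -- lifted height function
  set H : ℝ → ℝ := fun t => (h (Circle.exp t) : ℝ) with hHdef
  have Hcont : Continuous H := continuous_subtype_val.comp (hcont.comp Circle.exp.continuous)
  have Hexp : ∀ s t : ℝ, Circle.exp s = Circle.exp t → H s = H t := by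
    intro s t hst; simp only [hHdef, hst]
  have Hper : ∀ t, H (t + 2*π) = H t := fun t => Hexp _ _ (Circle.periodic_exp t)
  have H01 : ∀ t, H t ∈ Set.Icc (0:ℝ) 1 := fun t => (h (Circle.exp t)).2
  have Ht0 : H t0 = 0 := by
    have h9 : h a = 0 := (hz0 a).mpr rfl
    simp only [hHdef, hexpt0, h9, Set.Icc.coe_zero]
  have Ht1 : H t1 = 1 := by
    have h9 : h b = 1 := (hz1 b).mpr rfl
    simp only [hHdef, hexpt1, h9, Set.Icc.coe_one]
  have Ht2 : H (t0 + 2*π) = 0 := by rw [Hper, Ht0]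
  have Hval0 : ∀ t, H t = 0 → Circle.exp t = a := by
    intro t htv
    refine (hz0 _).mp (Subtype.ext ?_)
    simp only [Set.Icc.coe_zero]
    exact htv
  have Hval1 : ∀ t, H t = 1 → Circle.exp t = b := by
    intro t htv
    refine (hz1 _).mp (Subtype.ext ?_)
    simp only [Set.Icc.coe_one]
    exact htv
  -- two-point fibers over interior values
  have hfib : ∀ v : ℝ, 0 < v → v < 1 → ∃ x y : Circle, x ≠ y ∧
      ∀ z : Circle, (h z : ℝ) = v ↔ (z = x ∨ z = y) := by
    intro v h0 h1
    obtain ⟨x, y, hxy, hset⟩ := h2to1 ⟨v, le_of_lt h0, le_of_lt h1⟩ ⟨h0, h1⟩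
    refine ⟨x, y, hxy, fun z => ?_⟩
    have h9 : coordProj i (γ z) = lam ⟨v, le_of_lt h0, le_of_lt h1⟩ ↔
        z ∈ ({x, y} : Set Circle) := by
      rw [← hset]; rfl
    rw [← hchar] at h9
    constructor
    · intro hz
      simpa [Set.mem_insert_iff] using h9.mp (Subtype.ext hz)
    · intro hz
      have := h9.mpr (by simpa [Set.mem_insert_iff] using hz)
      exact congrArg Subtype.val this
  -- injectivity of H on the first arc
  have injOn1 : ∀ s t, s ∈ Set.Icc t0 t1 → t ∈ Set.Icc t0 t1 → H s = H t → s = t := by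
    have key : ∀ s t, s ∈ Set.Icc t0 t1 → t ∈ Set.Icc t0 t1 → H s = H t → s < t → False := by
      intro s t hs ht hval hlt
      have hsIco : s ∈ Set.Ico t0 (t0+2*π) := ⟨hs.1, lt_of_le_of_lt hs.2 ht12⟩
      have htIco : t ∈ Set.Ico t0 (t0+2*π) := ⟨ht.1, lt_of_le_of_lt ht.2 ht12⟩
      rcases lt_or_ge 0 (H s) with h0v | hv0
      · rcases lt_or_ge (H s) 1 with hv1 | h1v
        · -- interior value : find a third point on the other arc
          obtain ⟨x, y, hxy, hmem2⟩ := hfib (H s) h0v hv1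
          have hIVT := intermediate_value_Icc' (le_of_lt ht12) Hcont.continuousOn
          obtain ⟨u, hu, huv⟩ := hIVT (show H s ∈ Set.Icc (H (t0+2*π)) (H t1) by
            rw [Ht1, Ht2]; exact ⟨le_of_lt h0v, le_of_lt hv1⟩)
          have hu1 : t1 < u := lt_of_le_of_ne hu.1 (by rintro rfl; rw [Ht1] at huv; linarith)
          have hu2 : u < t0 + 2*π := lt_of_le_of_ne hu.2 (by rintro rfl; rw [Ht2] at huv; linarith)
          have huIco : u ∈ Set.Ico t0 (t0+2*π) := ⟨le_of_lt (lt_trans ht01 hu1), hu2⟩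
          have e1 : Circle.exp s ≠ Circle.exp t :=
            fun hh => absurd (exp_inj_Ico hsIco htIco hh) (ne_of_lt hlt)
          have e2 : Circle.exp s ≠ Circle.exp u :=
            fun hh => absurd (exp_inj_Ico hsIco huIco hh)
              (ne_of_lt (lt_of_le_of_lt hs.2 hu1))
          have e3 : Circle.exp t ≠ Circle.exp u :=
            fun hh => absurd (exp_inj_Ico htIco huIco hh)
              (ne_of_lt (lt_of_le_of_lt ht.2 hu1))
          have ms := (hmem2 (Circle.exp s)).mp rfl
          have mt := (hmem2 (Circle.exp t)).mp hval.symm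
          have mu := (hmem2 (Circle.exp u)).mp huv
          rcases ms with h | h <;> rcases mt with h' | h' <;> rcases mu with h'' | h''
          · exact e1 (h.trans h'.symm)
          · exact e1 (h.trans h'.symm)
          · exact e2 (h.trans h''.symm)
          · exact e3 (h'.trans h''.symm)
          · exact e3 (h'.trans h''.symm)
          · exact e2 (h.trans h''.symm)
          · exact e1 (h.trans h'.symm)
          · exact e1 (h.trans h'.symm)
        · -- value 1 : both points are b
          have hv1 : H s = 1 := le_antisymm (H01 s).2 h1v
          have es : Circle.exp s = b := Hval1 s hv1
          have et : Circle.exp t = b := Hval1 t (hval ▸ hv1)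
          exact absurd (exp_inj_Ico hsIco htIco (es.trans et.symm)) (ne_of_lt hlt)
      · -- value 0 : both points are a
        have hv0' : H s = 0 := le_antisymm hv0 (H01 s).1
        have es : Circle.exp s = a := Hval0 s hv0'
        have et : Circle.exp t = a := Hval0 t (hval ▸ hv0')
        exact absurd (exp_inj_Ico hsIco htIco (es.trans et.symm)) (ne_of_lt hlt)
    intro s t hs ht hval
    rcases lt_trichotomy s t with hlt | heq | hgt
    · exact absurd (key s t hs ht hval hlt) (not_false)
    · exact heq
    · exact absurd (key t s ht hs hval.symm hgt) (not_false)
  -- injectivity of H on the second arc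
  have injOn2 : ∀ s t, s ∈ Set.Icc t1 (t0+2*π) → t ∈ Set.Icc t1 (t0+2*π) → H s = H t → s = t := by
    have key : ∀ s t, s ∈ Set.Icc t1 (t0+2*π) → t ∈ Set.Icc t1 (t0+2*π) → H s = H t → s < t → False := by
      intro s t hs ht hval hlt
      have hsIco : s ∈ Set.Ico t0 (t0+2*π) :=
        ⟨le_trans (le_of_lt ht01) hs.1, lt_of_lt_of_le hlt ht.2⟩
      have ht0' : Circle.exp (t0 + 2*π) = a := by
        rw [← hexpt0]; exact Circle.periodic_exp t0
      rcases lt_or_ge 0 (H s) with h0v | hv0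
      · rcases lt_or_ge (H s) 1 with hv1 | h1v
        · -- interior value : find a third point on the first arc
          obtain ⟨x, y, hxy, hmem2⟩ := hfib (H s) h0v hv1
          have hIVT := intermediate_value_Icc (le_of_lt ht01) Hcont.continuousOn
          obtain ⟨u, hu, huv⟩ := hIVT (show H s ∈ Set.Icc (H t0) (H t1) by
            rw [Ht1, Ht0]; exact ⟨le_of_lt h0v, le_of_lt hv1⟩)
          have hu1 : t0 < u := lt_of_le_of_ne hu.1 (by rintro rfl; rw [Ht0] at huv; linarith)
          have hu2 : u < t1 := lt_of_le_of_ne hu.2 (by rintro rfl; rw [Ht1] at huv; linarith)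
          have huIco : u ∈ Set.Ico t0 (t0+2*π) := ⟨hu.1, lt_trans hu2 ht12⟩
          -- pairwise distinct exponentials
          have e1 : Circle.exp s ≠ Circle.exp t := by
            intro hh
            rcases lt_or_eq_of_le ht.2 with htlt | hteq
            · exact absurd (exp_inj_Ico hsIco ⟨le_trans (le_of_lt ht01) ht.1, htlt⟩ hh)
                (ne_of_lt hlt)
            · rw [hteq, ht0'] at hh
              have := exp_inj_Ico hsIco ⟨le_refl t0, by linarith⟩ (hh.trans hexpt0.symm)
              have := hs.1; linarith [ht01]
          have e2 : Circle.exp u ≠ Circle.exp s := by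
            intro hh
            exact absurd (exp_inj_Ico huIco hsIco hh) (ne_of_lt (lt_of_lt_of_le hu2 hs.1))
          have e3 : Circle.exp u ≠ Circle.exp t := by
            intro hh
            rcases lt_or_eq_of_le ht.2 with htlt | hteq
            · exact absurd (exp_inj_Ico huIco ⟨le_trans (le_of_lt ht01) ht.1, htlt⟩ hh)
                (ne_of_lt (lt_of_lt_of_le hu2 (le_trans hs.1 (le_of_lt hlt))))
            · rw [hteq, ht0'] at hh
              have := exp_inj_Ico huIco ⟨le_refl t0, by linarith⟩ (hh.trans hexpt0.symm)
              linarith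
          have ms := (hmem2 (Circle.exp s)).mp rfl
          have mt := (hmem2 (Circle.exp t)).mp hval.symm
          have mu := (hmem2 (Circle.exp u)).mp huv
          rcases ms with h | h <;> rcases mt with h' | h' <;> rcases mu with h'' | h''
          · exact e1 (h.trans h'.symm)
          · exact e1 (h.trans h'.symm)
          · exact e2 (h''.trans h.symm)
          · exact e3 (h''.trans h'.symm)
          · exact e3 (h''.trans h'.symm)
          · exact e2 (h''.trans h.symm)
          · exact e1 (h.trans h'.symm)
          · exact e1 (h.trans h'.symm)
        · -- value 1 : s = t1 and t gives a contradiction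
          have hv1 : H s = 1 := le_antisymm (H01 s).2 h1v
          have es : Circle.exp s = b := Hval1 s hv1
          have hst1 : s = t1 := exp_inj_Ico hsIco ⟨le_of_lt ht01, ht12⟩ (es.trans hexpt1.symm)
          have et : Circle.exp t = b := Hval1 t (hval ▸ hv1)
          rcases lt_or_eq_of_le ht.2 with htlt | hteq
          · have := exp_inj_Ico ⟨le_trans (le_of_lt ht01) ht.1, htlt⟩ ⟨le_of_lt ht01, ht12⟩
              (et.trans hexpt1.symm)
            rw [hst1] at hlt; rw [this] at hlt; exact lt_irrefl _ hlt
          · rw [hteq, ht0'] at et; exact hab et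
      · -- value 0 : s would be t0, impossible on the second arc
        have hv0' : H s = 0 := le_antisymm hv0 (H01 s).1
        have es : Circle.exp s = a := Hval0 s hv0'
        have := exp_inj_Ico hsIco ⟨le_refl t0, by linarith⟩ (es.trans hexpt0.symm)
        have := hs.1; linarith
    intro s t hs ht hval
    rcases lt_trichotomy s t with hlt | heq | hgt
    · exact absurd (key s t hs ht hval hlt) (not_false)
    · exact heq
    · exact absurd (key t s ht hs hval.symm hgt) (not_false)
  -- inverses of H on the two arcs
  have ex1 : ∀ v : ℝ, 0 ≤ v → v ≤ 1 → ∃ s, s ∈ Set.Icc t0 t1 ∧ H s = v := by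
    intro v h0 h1
    obtain ⟨u, hu, huv⟩ := intermediate_value_Icc (le_of_lt ht01) Hcont.continuousOn
      (show v ∈ Set.Icc (H t0) (H t1) by rw [Ht0, Ht1]; exact ⟨h0, h1⟩)
    exact ⟨u, hu, huv⟩
  have ex2 : ∀ v : ℝ, 0 ≤ v → v ≤ 1 → ∃ s, s ∈ Set.Icc t1 (t0+2*π) ∧ H s = v := by
    intro v h0 h1
    obtain ⟨u, hu, huv⟩ := intermediate_value_Icc' (le_of_lt ht12) Hcont.continuousOn
      (show v ∈ Set.Icc (H (t0+2*π)) (H t1) by rw [Ht2, Ht1]; exact ⟨h0, h1⟩)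
    exact ⟨u, hu, huv⟩
  choose! ι₁ hι₁mem hι₁val using ex1
  choose! ι₂ hι₂mem hι₂val using ex2
  have hι₁uniq : ∀ v : ℝ, 0 ≤ v → v ≤ 1 → ∀ s, s ∈ Set.Icc t0 t1 → H s = v → s = ι₁ v := by
    intro v h0 h1 s hs hsv
    exact injOn1 s (ι₁ v) hs (hι₁mem v h0 h1) (by rw [hsv, hι₁val v h0 h1])
  have hι₂uniq : ∀ v : ℝ, 0 ≤ v → v ≤ 1 → ∀ s, s ∈ Set.Icc t1 (t0+2*π) → H s = v → s = ι₂ v := by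
    intro v h0 h1 s hs hsv
    exact injOn2 s (ι₂ v) hs (hι₂mem v h0 h1) (by rw [hsv, hι₂val v h0 h1])
  have ι₁mono : ∀ u v : ℝ, 0 ≤ u → u ≤ v → v ≤ 1 → ι₁ u ≤ ι₁ v := by
    intro u v h0 huv h1
    by_contra hlt
    push_neg at hlt
    have h0v : 0 ≤ v := le_trans h0 huv
    have h1u : u ≤ 1 := le_trans huv h1
    obtain ⟨s, hs, hsv⟩ := intermediate_value_Icc (hι₁mem v h0v h1).1 Hcont.continuousOn
      (show u ∈ Set.Icc (H t0) (H (ι₁ v)) by rw [Ht0, hι₁val v h0v h1]; exact ⟨h0, huv⟩)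
    have heq : s = ι₁ u := hι₁uniq u h0 h1u s ⟨hs.1, le_trans hs.2 (hι₁mem v h0v h1).2⟩ hsv
    rw [heq] at hs
    linarith [hs.2]
  have ι₂anti : ∀ u v : ℝ, 0 ≤ u → u ≤ v → v ≤ 1 → ι₂ v ≤ ι₂ u := by
    intro u v h0 huv h1
    by_contra hlt
    push_neg at hlt
    have h0v : 0 ≤ v := le_trans h0 huv
    have h1u : u ≤ 1 := le_trans huv h1
    obtain ⟨s, hs, hsv⟩ := intermediate_value_Icc' (hι₂mem v h0v h1).2 Hcont.continuousOn
      (show u ∈ Set.Icc (H (t0+2*π)) (H (ι₂ v)) by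
        rw [Ht2, hι₂val v h0v h1]; exact ⟨h0, huv⟩)
    have heq : s = ι₂ u := hι₂uniq u h0 h1u s ⟨le_trans (hι₂mem v h0v h1).1 hs.1, hs.2⟩ hsv
    rw [heq] at hs
    linarith [hs.1]
  -- monotonicity of H on the arcs
  have Hmono1 : ∀ s t, s ∈ Set.Icc t0 t1 → t ∈ Set.Icc t0 t1 → s ≤ t → H s ≤ H t := by
    intro s t hs ht hst
    by_contra hlt
    push_neg at hlt
    obtain ⟨u, hu, huv⟩ := intermediate_value_Icc ht.2 Hcont.continuousOn
      (show H s ∈ Set.Icc (H t) (H t1) by rw [Ht1]; exact ⟨le_of_lt hlt, (H01 s).2⟩)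
    have heq : u = s := injOn1 u s ⟨le_trans ht.1 hu.1, hu.2⟩ hs huv
    have : t ≤ s := heq ▸ hu.1
    have : s = t := le_antisymm hst this
    rw [this] at hlt; exact lt_irrefl _ hlt
  have Hanti2 : ∀ s t, s ∈ Set.Icc t1 (t0+2*π) → t ∈ Set.Icc t1 (t0+2*π) → s ≤ t → H t ≤ H s := by
    intro s t hs ht hst
    by_contra hlt
    push_neg at hlt
    obtain ⟨u, hu, huv⟩ := intermediate_value_Icc' ht.2 Hcont.continuousOn
      (show H s ∈ Set.Icc (H (t0+2*π)) (H t) by rw [Ht2]; exact ⟨(H01 s).1, le_of_lt hlt⟩)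
    have heq : u = s := injOn2 u s ⟨le_trans ht.1 hu.1, hu.2⟩ hs huv
    have : t ≤ s := heq ▸ hu.1
    have : s = t := le_antisymm hst this
    rw [this] at hlt; exact lt_irrefl _ hlt
  -- the flip on the fundamental window
  set F0 : ℝ → ℝ := fun t => if t ≤ t1 then ι₂ (H t) else ι₁ (H t) with hF0def
  have hF0_arc1 : ∀ t, t ≤ t1 → F0 t = ι₂ (H t) := fun t ht => if_pos ht
  have hF0_arc2 : ∀ t, t1 < t → F0 t = ι₁ (H t) := fun t ht => if_neg (not_le.mpr ht)
  have hF0mem1 : ∀ t, t ≤ t1 → F0 t ∈ Set.Icc t1 (t0+2*π) := by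
    intro t ht; rw [hF0_arc1 t ht]; exact hι₂mem _ (H01 t).1 (H01 t).2
  have hF0mem2 : ∀ t, t1 < t → F0 t ∈ Set.Icc t0 t1 := by
    intro t ht; rw [hF0_arc2 t ht]; exact hι₁mem _ (H01 t).1 (H01 t).2
  have hF0win : ∀ t, F0 t ∈ Set.Icc t0 (t0+2*π) := by
    intro t
    by_cases ht : t ≤ t1
    · exact ⟨le_trans (le_of_lt ht01) (hF0mem1 t ht).1, (hF0mem1 t ht).2⟩
    · push_neg at ht
      exact ⟨(hF0mem2 t ht).1, le_trans (hF0mem2 t ht).2 (le_of_lt ht12)⟩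
  have hF0H : ∀ t, H (F0 t) = H t := by
    intro t
    by_cases ht : t ≤ t1
    · rw [hF0_arc1 t ht]; exact hι₂val _ (H01 t).1 (H01 t).2
    · push_neg at ht; rw [hF0_arc2 t ht]; exact hι₁val _ (H01 t).1 (H01 t).2
  have hι₂zero : ι₂ 0 = t0 + 2*π :=
    (hι₂uniq 0 le_rfl zero_le_one (t0+2*π) ⟨le_of_lt ht12, le_rfl⟩ Ht2).symm
  have hι₁zero : ι₁ 0 = t0 := (hι₁uniq 0 le_rfl zero_le_one t0 ⟨le_rfl, le_of_lt ht01⟩ Ht0).symm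
  have hι₂one : ι₂ 1 = t1 := (hι₂uniq 1 zero_le_one le_rfl t1 ⟨le_rfl, le_of_lt ht12⟩ Ht1).symm
  have hι₁one : ι₁ 1 = t1 := (hι₁uniq 1 zero_le_one le_rfl t1 ⟨le_of_lt ht01, le_rfl⟩ Ht1).symm
  have hF0t0 : F0 t0 = t0 + 2*π := by rw [hF0_arc1 t0 (le_of_lt ht01), Ht0, hι₂zero]
  have hF0t1 : F0 t1 = t1 := by rw [hF0_arc1 t1 le_rfl, Ht1, hι₂one]
  have hF0t2 : F0 (t0+2*π) = t0 := by rw [hF0_arc2 _ ht12, Ht2, hι₁zero]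
  have hF0anti : ∀ s t, s ∈ Set.Icc t0 (t0+2*π) → t ∈ Set.Icc t0 (t0+2*π) → s ≤ t →
      F0 t ≤ F0 s := by
    intro s t hs ht hst
    by_cases hs1 : s ≤ t1
    · by_cases ht1 : t ≤ t1
      · rw [hF0_arc1 s hs1, hF0_arc1 t ht1]
        exact ι₂anti _ _ (H01 s).1 (Hmono1 s t ⟨hs.1, hs1⟩ ⟨ht.1, ht1⟩ hst) (H01 t).2
      · push_neg at ht1
        calc F0 t ≤ t1 := (hF0mem2 t ht1).2
          _ ≤ F0 s := (hF0mem1 s hs1).1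
    · push_neg at hs1
      rw [hF0_arc2 s hs1, hF0_arc2 t (lt_of_lt_of_le hs1 hst)]
      exact ι₁mono _ _ (H01 t).1
        (Hanti2 s t ⟨le_of_lt hs1, hs.2⟩ ⟨le_trans (le_of_lt hs1) hst, ht.2⟩ hst) (H01 s).2
  have hF0F0 : ∀ t, t ∈ Set.Icc t0 (t0+2*π) → F0 (F0 t) = t := by
    intro t ht
    by_cases ht1 : t ≤ t1
    · rcases lt_or_eq_of_le (hF0mem1 t ht1).1 with hgt | heq
      · rw [hF0_arc2 _ hgt, hF0H]
        exact (hι₁uniq _ (H01 t).1 (H01 t).2 t ⟨ht.1, ht1⟩ rfl).symm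
      · have h1 : H t = 1 := by rw [← hF0H t, ← heq, Ht1]
        have ht1' : t = t1 := by
          have := hι₁uniq 1 zero_le_one le_rfl t ⟨ht.1, ht1⟩ h1
          rw [this, hι₁one]
        rw [ht1', hF0t1, hF0t1]
    · push_neg at ht1
      have hmem := hF0mem2 t ht1
      rw [hF0_arc1 _ hmem.2, hF0H]
      exact (hι₂uniq _ (H01 t).1 (H01 t).2 t ⟨le_of_lt ht1, ht.2⟩ rfl).symm
  -- floor machinery and the global lift F
  set k : ℝ → ℤ := fun t => ⌊(t - t0) / (2*π)⌋ with hkdef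
  have hw_mem : ∀ t : ℝ, t - (k t : ℝ) * (2*π) ∈ Set.Ico t0 (t0+2*π) := by
    intro t
    have h1 := Int.sub_floor_div_mul_nonneg (t - t0) Real.two_pi_pos
    have h2 := Int.sub_floor_div_mul_lt (t - t0) Real.two_pi_pos
    constructor
    · simp only [hkdef]; linarith
    · simp only [hkdef]; linarith
  have hk_add : ∀ (t : ℝ) (m : ℤ), k (t + m * (2*π)) = k t + m := by
    intro t m
    have h9 : (t + (m:ℝ)*(2*π) - t0)/(2*π) = (t - t0)/(2*π) + (m:ℝ) := by
      field_simp
      ring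
    simp only [hkdef, h9, Int.floor_add_intCast]
  have hk_win : ∀ t, t ∈ Set.Ico t0 (t0+2*π) → k t = 0 := by
    intro t ht
    simp only [hkdef]
    rw [Int.floor_eq_zero_iff]
    constructor
    · exact div_nonneg (by linarith [ht.1]) (le_of_lt Real.two_pi_pos)
    · rw [div_lt_one Real.two_pi_pos]; linarith [ht.2]
  set F : ℝ → ℝ := fun t => F0 (t - (k t : ℝ) * (2*π)) - (k t : ℝ) * (2*π) with hFdef
  have hF_win : ∀ t, t ∈ Set.Ico t0 (t0+2*π) → F t = F0 t := by
    intro t ht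
    simp only [hFdef, hk_win t ht]
    norm_num
  have hF_eqv : ∀ (t : ℝ) (m : ℤ), F (t + m * (2*π)) = F t - m * (2*π) := by
    intro t m
    have h9 : t + (m:ℝ) * (2*π) - ((k t + m : ℤ) : ℝ) * (2*π) = t - (k t : ℝ) * (2*π) := by
      push_cast; ring
    simp only [hFdef, hk_add t m, h9]
    push_cast; ring
  have hFH : ∀ t, H (F t) = H t := by
    intro t
    calc H (F t) = H (F0 (t - (k t : ℝ) * (2*π))) := Hexp _ _ (exp_sub_int_mul _ _)
      _ = H (t - (k t : ℝ) * (2*π)) := hF0H _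
      _ = H t := Hexp _ _ (exp_sub_int_mul t (k t))
  have hFanti : Antitone F := by
    intro s t hst
    have hks : k s ≤ k t := by
      simp only [hkdef]
      exact Int.floor_le_floor ((div_le_div_iff_of_pos_right Real.two_pi_pos).mpr (by linarith))
    rcases lt_or_eq_of_le hks with hlt | heq
    · have hc : (k s : ℝ) + 1 ≤ (k t : ℝ) := by exact_mod_cast Int.add_one_le_iff.mpr hlt
      have hFs : t0 - (k s : ℝ)*(2*π) ≤ F s := by
        have := (hF0win (s - (k s : ℝ)*(2*π))).1
        simp only [hFdef]; linarith
      have hFt : F t ≤ (t0 + 2*π) - (k t : ℝ)*(2*π) := by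
        have := (hF0win (t - (k t : ℝ)*(2*π))).2
        simp only [hFdef]; linarith
      nlinarith [mul_le_mul_of_nonneg_right hc (le_of_lt Real.two_pi_pos)]
    · have hws : s - (k s : ℝ)*(2*π) ≤ t - (k t : ℝ)*(2*π) := by rw [heq]; linarith
      have h1 := hF0anti _ _ (Set.Ico_subset_Icc_self (hw_mem s))
        (Set.Ico_subset_Icc_self (hw_mem t)) hws
      simp only [hFdef, heq] at *
      linarith
  have hFsurj : Function.Surjective F := by
    intro y
    have hy'mem := hw_mem y
    set y' := y - (k y : ℝ)*(2*π) with hy'def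
    by_cases h0' : y' = t0
    · refine ⟨t0 + 2*π + ((-(k y) : ℤ) : ℝ) * (2*π), ?_⟩
      rw [hF_eqv (t0 + 2*π) (-(k y))]
      have h1 : F (t0 + 2*π) = t0 := by
        have h2 : t0 + 2*π = t0 + ((1:ℤ):ℝ) * (2*π) := by push_cast; ring
        rw [h2, hF_eqv t0 1, hF_win t0 ⟨le_rfl, by linarith⟩, hF0t0]
        push_cast; ring
      rw [h1]
      have h3 : ((-(k y) : ℤ) : ℝ) = -((k y : ℤ) : ℝ) := by push_cast; ring
      rw [h3]
      rw [hy'def] at h0'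
      linarith [h0']
    · have hlt : F0 y' < t0 + 2*π := by
        rcases lt_or_eq_of_le (hF0win y').2 with hc | hc
        · exact hc
        · exfalso
          have hd := hF0F0 y' (Set.Ico_subset_Icc_self hy'mem)
          rw [hc, hF0t2] at hd
          exact h0' hd.symm
      refine ⟨F0 y' + ((-(k y) : ℤ) : ℝ) * (2*π), ?_⟩
      rw [hF_eqv (F0 y') (-(k y)), hF_win (F0 y') ⟨(hF0win y').1, hlt⟩,
        hF0F0 y' (Set.Ico_subset_Icc_self hy'mem)]
      have h3 : ((-(k y) : ℤ) : ℝ) = -((k y : ℤ) : ℝ) := by push_cast; ring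
      rw [h3, hy'def]
      ring
  have hFcont : Continuous F := by
    have hmono : Monotone (fun t => -(F t)) := fun s t hst => neg_le_neg (hFanti hst)
    have hsurj : Function.Surjective (fun t => -(F t)) := by
      intro y; obtain ⟨x, hx⟩ := hFsurj (-y)
      exact ⟨x, by show -(F x) = y; rw [hx]; ring⟩
    have h1 := hmono.continuous_of_surjective hsurj
    have h2 : Continuous (fun t => -(-(F t))) := h1.neg
    simpa using h2
  -- the flipping map itself
  set g : Circle → Circle := fun z => Circle.exp (F (Complex.arg (z : ℂ))) with hgdef
  have hgexp : ∀ t : ℝ, g (Circle.exp t) = Circle.exp (F t) := by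
    intro t
    have h1 : Circle.exp (Complex.arg ((Circle.exp t : Circle) : ℂ)) = Circle.exp t :=
      Circle.exp_arg (Circle.exp t)
    obtain ⟨m, hm⟩ := Circle.exp_eq_exp.mp h1
    show Circle.exp (F (Complex.arg ((Circle.exp t : Circle) : ℂ))) = Circle.exp (F t)
    rw [hm, hF_eqv t m]
    exact exp_sub_int_mul _ _
  have hgcont : Continuous g := by
    apply continuous_circle_of_comp_exp
    have h1 : (g ∘ Circle.exp) = fun t => Circle.exp (F t) := funext hgexp
    rw [h1]
    exact (map_continuous Circle.exp).comp hFcont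
  have hdeg : CircleDeg g (-1) := by
    refine ⟨F, hFcont, hgexp, fun t => ?_⟩
    have h1 := hF_eqv t 1
    have h2 : t + ((1:ℤ):ℝ) * (2*π) = t + 2*π := by push_cast; ring
    rw [h2] at h1
    rw [h1]
    push_cast
    ring
  have hproj : ∀ z, coordProj i (γ (g z)) = coordProj i (γ z) := by
    intro z
    have hz : Circle.exp (Complex.arg (z:ℂ)) = z := Circle.exp_arg z
    have h1 : h (g z) = h z := by
      apply Subtype.ext
      calc (h (g z) : ℝ) = H (F (Complex.arg (z:ℂ))) := rfl
        _ = H (Complex.arg (z:ℂ)) := hFH _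
        _ = (h z : ℝ) := by show (h (Circle.exp (Complex.arg (z:ℂ))) : ℝ) = _; rw [hz]
    rw [← hlamh (g z), ← hlamh z, h1]
  have hfix : ∀ z : Circle, g z = z ↔
      (coordProj i (γ z) = lam 0 ∨ coordProj i (γ z) = lam 1) := by
    intro z
    have hexpz0 : Circle.exp (Complex.arg (z:ℂ)) = z := Circle.exp_arg z
    set s := Complex.arg (z:ℂ) with hsdef
    set t := s - (k s : ℝ)*(2*π) with htdef
    have ht_mem : t ∈ Set.Ico t0 (t0+2*π) := hw_mem s
    have hexpz : Circle.exp t = z := by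
      rw [htdef, exp_sub_int_mul s (k s), hexpz0]
    have key : g z = Circle.exp (F0 t) := by
      rw [← hexpz, hgexp, hF_win t ht_mem]
    constructor
    · intro hgz
      have hee : Circle.exp (F0 t) = Circle.exp t := by rw [← key, hgz, ← hexpz]
      obtain ⟨m, hm⟩ := Circle.exp_eq_exp.mp hee
      by_cases ht1 : t ≤ t1
      · have hr := hF0mem1 t ht1
        have hb1 : 0 ≤ (m:ℝ)*(2*π) := by
          have : t ≤ F0 t := le_trans ht1 hr.1
          linarith [hm ▸ this]
        have hb2 : (m:ℝ)*(2*π) ≤ 2*π := by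
          have h3 : F0 t ≤ t0 + 2*π := hr.2
          have h4 : t0 ≤ t := ht_mem.1
          have h5 : F0 t = t + (m:ℝ)*(2*π) := hm
          linarith
        have hm0 : (0:ℤ) ≤ m := by
          by_contra hc
          push_neg at hc
          have h6 : (m:ℝ) < 0 := by exact_mod_cast hc
          nlinarith [Real.two_pi_pos]
        have hm1 : m ≤ 1 := by
          by_contra hc
          push_neg at hc
          have h6 : (2:ℝ) ≤ (m:ℝ) := by exact_mod_cast hc
          nlinarith [Real.two_pi_pos]
        have hm01 : m = 0 ∨ m = 1 := by omega
        rcases hm01 with rfl | rfl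
        · -- fixed point is b
          have h7 : F0 t = t := by rw [hm]; push_cast; ring
          have h8 : t = t1 := le_antisymm ht1 (h7 ▸ hr.1)
          right
          have h9 : z = b := by rw [← hexpz, h8, hexpt1]
          rw [h9]; exact hb
        · -- fixed point is a
          have h7 : F0 t = t + 2*π := by rw [hm]; push_cast; ring
          have h8 : t = t0 := le_antisymm (by linarith [hr.2, h7]) ht_mem.1
          left
          have h9 : z = a := by rw [← hexpz, h8, hexpt0]
          rw [h9]; exact ha
      · push_neg at ht1
        exfalso
        have hr := hF0mem2 t ht1
        have hb1 : (m:ℝ)*(2*π) < 0 := by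
          have h3 : F0 t ≤ t1 := hr.2
          have h5 : F0 t = t + (m:ℝ)*(2*π) := hm
          linarith
        have hb2 : -(2*π) < (m:ℝ)*(2*π) := by
          have h3 : t0 ≤ F0 t := hr.1
          have h4 : t < t0 + 2*π := ht_mem.2
          have h5 : F0 t = t + (m:ℝ)*(2*π) := hm
          linarith
        have hm0 : m < 0 := by
          by_contra hc
          push_neg at hc
          have h6 : (0:ℝ) ≤ (m:ℝ) := by exact_mod_cast hc
          nlinarith [Real.two_pi_pos]
        have hm1 : -1 < m := by
          by_contra hc
          push_neg at hc
          have h6 : (m:ℝ) ≤ -1 := by exact_mod_cast hc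
          nlinarith [Real.two_pi_pos]
        omega
    · intro hor
      rcases hor with h' | h'
      · have hz_eq : z = a := ha' z h'
        rw [hz_eq, ← hexpt0, hgexp, hF_win t0 ⟨le_rfl, by linarith⟩, hF0t0]
        exact Circle.periodic_exp t0
      · have hz_eq : z = b := hb' z h'
        rw [hz_eq, ← hexpt1, hgexp, hF_win t1 ⟨le_of_lt ht01, ht12⟩, hF0t1]
  exact ⟨g, hgcont, hdeg, hproj, hfix⟩
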